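/- arXiv:1708.05059 — 3 statements merged into one kernel-verified Lean document; each statement's English description precedes it below -/
import Mathlib

section
/- Let g be a 2n-dimensional real nilpotent Lie algebra with a complex structure J. If g_k ∩ J(g_k) = {0} for some integer k ≥ 1 (where g_k is the k-th term of the ascending central series), then g_{k+1} ∩ J(g_k) = {0}. -/
/-- The ascending central series of a Lie algebra:
`acs g 0 = 0`, `acs g (k+1) = {X | [X,g] ⊆ acs g k}`. -/
def acs (g : Type*) [LieRing g] [LieAlgebra ℝ g] : ℕ → Submodule ℝ g
  | 0 => ⊥
  | k + 1 =>
    { carrier := {X : g | ∀ Y : g, ⁅X, Y⁆ ∈ acs g k}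
      zero_mem' := by intro Y; simp
      add_mem' := by
        intro a b ha hb Y
        rw [add_lie]; exact (acs g k).add_mem (ha Y) (hb Y)
      smul_mem' := by
        intro c x hx Y
        rw [smul_lie]; exact (acs g k).smul_mem c (hx Y) }

lemma mem_acs_succ {g : Type*} [LieRing g] [LieAlgebra ℝ g] {X : g} {k : ℕ} :
    X ∈ acs g (k + 1) ↔ ∀ Y : g, ⁅X, Y⁆ ∈ acs g k := Iff.rfl

lemma acs_mono {g : Type*} [LieRing g] [LieAlgebra ℝ g] (k : ℕ) :
    acs g k ≤ acs g (k + 1) := by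
  induction k with
  | zero => exact bot_le
  | succ m ih =>
    intro X hX Z
    exact ih (hX Z)

/-- if `g_k ∩ J(g_k) = 0` for some `k ≥ 1`, then
`g_{k+1} ∩ J(g_k) = 0`. -/
theorem acs_succ_inf_J_acs_eq_bot (g : Type*) [LieRing g] [LieAlgebra ℝ g]
    [FiniteDimensional ℝ g] (n : ℕ) (hdim : Module.finrank ℝ g = 2 * n)
    (hnil : ∃ s : ℕ, acs g s = ⊤)
    (J : g →ₗ[ℝ] g) (hJ2 : ∀ X : g, J (J X) = -X)
    (hN : ∀ X Y : g, ⁅X, Y⁆ + J ⁅J X, Y⁆ + J ⁅X, J Y⁆ - ⁅J X, J Y⁆ = 0)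
    (k : ℕ) (hk : 1 ≤ k)
    (h : acs g k ⊓ (acs g k).map J = ⊥) :
    acs g (k + 1) ⊓ (acs g k).map J = ⊥ := by
  -- J is injective
  have hJinj : ∀ a : g, J a = 0 → a = 0 := by
    intro a ha
    have := hJ2 a
    rw [ha, map_zero] at this
    exact neg_eq_zero.mp this.symm
  rw [eq_bot_iff]
  rintro X ⟨hX1, Y, hY, hYX⟩
  obtain ⟨m, rfl⟩ : ∃ m, k = m + 1 := ⟨k - 1, (Nat.succ_pred_eq_of_pos hk).symm⟩
  -- key: for all Z, ⁅X, J Z⁆ = ⁅Y, Z⁆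
  have key : ∀ Z : g, ⁅X, J Z⁆ = ⁅Y, Z⁆ := by
    intro Z
    have hJX : J X = -Y := by rw [← hYX, hJ2]
    have hnij := hN X Z
    rw [hJX] at hnij
    -- hnij : ⁅X,Z⁆ + J ⁅-Y,Z⁆ + J ⁅X, J Z⁆ - ⁅-Y, J Z⁆ = 0
    have heq : J (⁅X, J Z⁆ - ⁅Y, Z⁆) = -⁅X, Z⁆ - ⁅Y, J Z⁆ := by
      rw [neg_lie, neg_lie, map_neg] at hnij
      rw [map_sub]
      apply eq_of_sub_eq_zero
      rw [show (J ⁅X, J Z⁆ - J ⁅Y, Z⁆) - (-⁅X, Z⁆ - ⁅Y, J Z⁆)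
            = ⁅X, Z⁆ + -J ⁅Y, Z⁆ + J ⁅X, J Z⁆ - -⁅Y, J Z⁆ from by abel, hnij]
    set w : g := ⁅X, J Z⁆ - ⁅Y, Z⁆ with hw
    have hw1 : w ∈ acs g (m + 1) := by
      apply Submodule.sub_mem
      · exact hX1 (J Z)
      · exact acs_mono m (hY Z)
    have hJw1 : J w ∈ acs g (m + 1) := by
      rw [heq]
      apply Submodule.sub_mem
      · exact Submodule.neg_mem _ (hX1 Z)
      · exact acs_mono m (hY (J Z))
    have hJw : J w ∈ acs g (m + 1) ⊓ (acs g (m + 1)).map J :=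
      ⟨hJw1, w, hw1, rfl⟩
    rw [h] at hJw
    have : w = 0 := hJinj w hJw
    rw [hw] at this
    exact sub_eq_zero.mp this
  -- hence X ∈ acs g (m+1)
  have hXk : X ∈ acs g (m + 1) := by
    intro W
    have hZ : J (-(J W)) = W := by rw [map_neg, hJ2, neg_neg]
    have := key (-(J W))
    rw [hZ] at this
    rw [this]
    exact hY (-(J W))
  have : X ∈ acs g (m + 1) ⊓ (acs g (m + 1)).map J := ⟨hXk, Y, hY, hYX⟩
  rw [h] at this
  exact this
end

section
/- The 8-dimensional real nilpotent Lie algebra g = h × ℝ, where h is the 7-dimensional nilpotent Lie algebra with basis X₁,...,X₇ and nonzero brackets [X₁,X₂] = X₃, [X₁,X₃] = X₄, [X₁,X₄] = X₅, [X₂,X₃] = X₆, [X₁,X₅] = [X₂,X₆] = X₇, does not admit any complex structure. -/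
section helpers
variable {g : Type*} [LieRing g] [LieAlgebra ℝ g]

/-- linear combination of basis vectors with coefficient function `c` -/
noncomputable def lc (e : Module.Basis (Fin 8) ℝ g) (c : Fin 8 → ℝ) : g := ∑ k, c k • e k

/-- the structure constants of the bracket, as a bilinear operation on coordinates -/
def brk (c d : Fin 8 → ℝ) : Fin 8 → ℝ := fun k =>
  if k = 2 then c 0 * d 1 - c 1 * d 0
  else if k = 3 then c 0 * d 2 - c 2 * d 0
  else if k = 4 then c 0 * d 3 - c 3 * d 0
  else if k = 5 then c 1 * d 2 - c 2 * d 1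
  else if k = 6 then c 0 * d 4 - c 4 * d 0 + (c 1 * d 5 - c 5 * d 1)
  else 0

noncomputable def tbl (e : Module.Basis (Fin 8) ℝ g) (i j : Fin 8) : g :=
  if i = 0 ∧ j = 1 then e 2
  else if i = 0 ∧ j = 2 then e 3
  else if i = 0 ∧ j = 3 then e 4
  else if i = 1 ∧ j = 2 then e 5
  else if i = 0 ∧ j = 4 then e 6
  else if i = 1 ∧ j = 5 then e 6
  else 0

lemma repr_lc (e : Module.Basis (Fin 8) ℝ g) (c : Fin 8 → ℝ) (i : Fin 8) :
    e.repr (lc e c) i = c i := by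
  simp [lc, map_sum, Finsupp.finset_sum_apply, Module.Basis.repr_self,
    Finsupp.single_apply, Finset.sum_ite_eq]

lemma lc_repr (e : Module.Basis (Fin 8) ℝ g) (x : g) : lc e (e.repr x) = x := e.sum_repr x

lemma lc_add (e : Module.Basis (Fin 8) ℝ g) (c d : Fin 8 → ℝ) :
    lc e (fun k => c k + d k) = lc e c + lc e d := by
  simp [lc, add_smul, Finset.sum_add_distrib]

lemma lc_sub (e : Module.Basis (Fin 8) ℝ g) (c d : Fin 8 → ℝ) :
    lc e (fun k => c k - d k) = lc e c - lc e d := by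
  simp [lc, sub_smul, Finset.sum_sub_distrib]

lemma lc_neg (e : Module.Basis (Fin 8) ℝ g) (c : Fin 8 → ℝ) :
    lc e (fun k => -(c k)) = -(lc e c) := by
  simp [lc]

lemma lc_zero (e : Module.Basis (Fin 8) ℝ g) : lc e (fun _ => 0) = 0 := by simp [lc]

lemma lc_single (e : Module.Basis (Fin 8) ℝ g) (a : ℝ) (i : Fin 8) :
    lc e (fun k => if k = i then a else 0) = a • e i := by
  simp [lc, ite_smul, Finset.sum_ite_eq']

lemma brk_apply0 (c d : Fin 8 → ℝ) : brk c d 0 = 0 := by simp [brk]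
lemma brk_apply1 (c d : Fin 8 → ℝ) : brk c d 1 = 0 := by simp [brk]

/-- brackets of two elements of the abelian ideal V = span(e2,...,e7) vanish -/
lemma brk_VV (c d : Fin 8 → ℝ) (hc0 : c 0 = 0) (hc1 : c 1 = 0)
    (hd0 : d 0 = 0) (hd1 : d 1 = 0) : brk c d = fun _ => 0 := by
  funext k
  fin_cases k <;> simp [brk, hc0, hc1, hd0, hd1]

lemma tbl_lower (e : Module.Basis (Fin 8) ℝ g) (i j : Fin 8) (h : i ≤ j) : tbl e j i = 0 := by
  unfold tbl
  split_ifs with h1 h2 h3 h4 h5 h6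
  · exact absurd h (by obtain ⟨rfl, rfl⟩ := h1; decide)
  · exact absurd h (by obtain ⟨rfl, rfl⟩ := h2; decide)
  · exact absurd h (by obtain ⟨rfl, rfl⟩ := h3; decide)
  · exact absurd h (by obtain ⟨rfl, rfl⟩ := h4; decide)
  · exact absurd h (by obtain ⟨rfl, rfl⟩ := h5; decide)
  · exact absurd h (by obtain ⟨rfl, rfl⟩ := h6; decide)
  · rfl

lemma bracket_table (e : Module.Basis (Fin 8) ℝ g)
    (hbr : ∀ i j : Fin 8, i < j → ⁅e i, e j⁆ =
      if i = 0 ∧ j = 1 then e 2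
      else if i = 0 ∧ j = 2 then e 3
      else if i = 0 ∧ j = 3 then e 4
      else if i = 1 ∧ j = 2 then e 5
      else if i = 0 ∧ j = 4 then e 6
      else if i = 1 ∧ j = 5 then e 6
      else 0) (i j : Fin 8) :
    ⁅e i, e j⁆ = tbl e i j - tbl e j i := by
  rcases lt_trichotomy i j with h | h | h
  · rw [hbr i j h, tbl_lower e i j h.le, sub_zero]; rfl
  · subst h; rw [tbl_lower e i i le_rfl, sub_self, lie_self]
  · rw [tbl_lower e j i h.le, zero_sub, ← lie_skew, hbr j i h]; rfl

/-- the bracket in coordinates -/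
lemma lie_lc (e : Module.Basis (Fin 8) ℝ g)
    (hbr : ∀ i j : Fin 8, i < j → ⁅e i, e j⁆ =
      if i = 0 ∧ j = 1 then e 2
      else if i = 0 ∧ j = 2 then e 3
      else if i = 0 ∧ j = 3 then e 4
      else if i = 1 ∧ j = 2 then e 5
      else if i = 0 ∧ j = 4 then e 6
      else if i = 1 ∧ j = 5 then e 6
      else 0) (c d : Fin 8 → ℝ) :
    ⁅lc e c, lc e d⁆ = lc e (brk c d) := by
  have bt := bracket_table e hbr
  rw [lc, lc]
  simp only [Fin.sum_univ_eight]
  simp only [add_lie, lie_add, smul_lie, lie_smul, bt, tbl, lc, brk, Fin.sum_univ_eight,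
    Fin.reduceEq, reduceIte, and_self, and_true, true_and, and_false, false_and]
  module

end helpers


set_option maxHeartbeats 2000000 in
/-- the 8-dimensional nilpotent Lie algebra `g = h × ℝ`, with
basis `e 0,…,e 7` (where `e 0,…,e 6` span `h` and `e 7` spans the factor `ℝ`)
and nonzero brackets `[e0,e1]=e2`, `[e0,e2]=e3`, `[e0,e3]=e4`, `[e1,e2]=e5`,
`[e0,e4]=[e1,e5]=e6`, admits no complex structure. -/
theorem example_dim8_no_complex_structure (g : Type*) [LieRing g]
    [LieAlgebra ℝ g] (e : Module.Basis (Fin 8) ℝ g)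
    (hbr : ∀ i j : Fin 8, i < j → ⁅e i, e j⁆ =
      if i = 0 ∧ j = 1 then e 2
      else if i = 0 ∧ j = 2 then e 3
      else if i = 0 ∧ j = 3 then e 4
      else if i = 1 ∧ j = 2 then e 5
      else if i = 0 ∧ j = 4 then e 6
      else if i = 1 ∧ j = 5 then e 6
      else 0) :
    ¬ ∃ J : g →ₗ[ℝ] g, (∀ X : g, J (J X) = -X) ∧
      (∀ X Y : g, ⁅X, Y⁆ + J ⁅J X, Y⁆ + J ⁅X, J Y⁆ - ⁅J X, J Y⁆ = 0) := by
  rintro ⟨J, hJ2, hN⟩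
  have hlie : ∀ c d : Fin 8 → ℝ, ⁅lc e c, lc e d⁆ = lc e (brk c d) := lie_lc e hbr
  -- coordinates of J on a linear combination
  have reprJ : ∀ (c : Fin 8 → ℝ) (i : Fin 8),
      e.repr (J (lc e c)) i = ∑ k, c k * e.repr (J (e k)) i := by
    intro c i
    rw [lc, map_sum, map_sum]
    simp [Finsupp.finset_sum_apply, smul_eq_mul]
  by_cases hall : ∀ k : Fin 8, k ≠ 0 → k ≠ 1 →
      e.repr (J (e k)) 0 = 0 ∧ e.repr (J (e k)) 1 = 0
  · -- CASE II : J e2 (and the rest) stays in V = span(e2,…,e7)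
    obtain ⟨hm0, hm1⟩ := hall 2 (by decide) (by decide)
    set d0 : Fin 8 → ℝ := fun k => if k = 0 then (1:ℝ) else 0 with hd0def
    set d2 : Fin 8 → ℝ := fun k => if k = 2 then (1:ℝ) else 0 with hd2def
    have he0 : lc e d0 = e 0 := by rw [hd0def, lc_single, one_smul]
    have he2 : lc e d2 = e 2 := by rw [hd2def, lc_single, one_smul]
    set j0 : Fin 8 → ℝ := ⇑(e.repr (J (e 0))) with hj0def
    set mc : Fin 8 → ℝ := ⇑(e.repr (J (e 2))) with hmcdef
    have hJd0 : J (lc e d0) = lc e j0 := by rw [he0, hj0def, lc_repr]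
    have hJe2 : J (lc e d2) = lc e mc := by rw [he2, hmcdef, lc_repr]
    have step : ∀ cf nf : Fin 8 → ℝ, J (lc e cf) = lc e nf →
        J (lc e (fun k => brk d0 cf k - brk j0 nf k)) =
          lc e (fun k => brk j0 cf k + brk d0 nf k) := by
      intro cf nf h
      have hNs := hN (lc e d0) (lc e cf)
      rw [hJd0, h] at hNs
      simp only [hlie] at hNs
      have key : lc e (brk d0 cf) - lc e (brk j0 nf) =
          -(J (lc e (brk j0 cf)) + J (lc e (brk d0 nf))) := by
        apply eq_neg_of_add_eq_zero_left
        rw [← hNs]; abel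
      rw [lc_sub, lc_add, key, map_neg, map_add, hJ2, hJ2]
      abel
    have h1 := step d2 mc hJe2
    have hc1 : (fun k => brk d0 d2 k - brk j0 mc k) = (fun k : Fin 8 =>
        if k = 3 then 1 - j0 0 * mc 2
        else if k = 4 then -(j0 0 * mc 3)
        else if k = 5 then -(j0 1 * mc 2)
        else if k = 6 then -(j0 0 * mc 4) - j0 1 * mc 5 else 0) := by
      funext i
      fin_cases i <;> simp [brk, hd0def, hd2def, hm0, hm1] <;> ring
    have hn1 : (fun k => brk j0 d2 k + brk d0 mc k) = (fun k : Fin 8 =>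
        if k = 3 then j0 0 + mc 2
        else if k = 4 then mc 3
        else if k = 5 then j0 1
        else if k = 6 then mc 4 else 0) := by
      funext i
      fin_cases i <;> simp [brk, hd0def, hd2def, hm0, hm1] <;> ring
    rw [hc1, hn1] at h1
    have h2 := step _ _ h1
    have hc2 : (fun k => brk d0 (fun k : Fin 8 =>
        if k = 3 then 1 - j0 0 * mc 2
        else if k = 4 then -(j0 0 * mc 3)
        else if k = 5 then -(j0 1 * mc 2)
        else if k = 6 then -(j0 0 * mc 4) - j0 1 * mc 5 else 0) k - brk j0 (fun k : Fin 8 =>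
        if k = 3 then j0 0 + mc 2
        else if k = 4 then mc 3
        else if k = 5 then j0 1
        else if k = 6 then mc 4 else 0) k) = (fun k : Fin 8 =>
        if k = 4 then 1 - j0 0 ^ 2 - 2 * (j0 0 * mc 2)
        else if k = 6 then -(2 * (j0 0 * mc 3)) - j0 1 ^ 2 else 0) := by
      funext i
      fin_cases i <;> simp [brk, hd0def] <;> ring
    have hn2 : (fun k => brk j0 (fun k : Fin 8 =>
        if k = 3 then 1 - j0 0 * mc 2
        else if k = 4 then -(j0 0 * mc 3)
        else if k = 5 then -(j0 1 * mc 2)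
        else if k = 6 then -(j0 0 * mc 4) - j0 1 * mc 5 else 0) k + brk d0 (fun k : Fin 8 =>
        if k = 3 then j0 0 + mc 2
        else if k = 4 then mc 3
        else if k = 5 then j0 1
        else if k = 6 then mc 4 else 0) k) = (fun k : Fin 8 =>
        if k = 4 then 2 * j0 0 + mc 2 - j0 0 ^ 2 * mc 2
        else if k = 6 then mc 3 - j0 0 ^ 2 * mc 3 - j0 1 ^ 2 * mc 2 else 0) := by
      funext i
      fin_cases i <;> simp [brk, hd0def] <;> ring
    rw [hc2, hn2] at h2
    have h3 := step _ _ h2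
    have hc3 : (fun k => brk d0 (fun k : Fin 8 =>
        if k = 4 then 1 - j0 0 ^ 2 - 2 * (j0 0 * mc 2)
        else if k = 6 then -(2 * (j0 0 * mc 3)) - j0 1 ^ 2 else 0) k - brk j0 (fun k : Fin 8 =>
        if k = 4 then 2 * j0 0 + mc 2 - j0 0 ^ 2 * mc 2
        else if k = 6 then mc 3 - j0 0 ^ 2 * mc 3 - j0 1 ^ 2 * mc 2 else 0) k) = (fun k : Fin 8 =>
        if k = 6 then 1 - 3 * j0 0 ^ 2 - (3 * j0 0 - j0 0 ^ 3) * mc 2 else 0) := by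
      funext i
      fin_cases i <;> simp [brk, hd0def] <;> ring
    have hn3 : (fun k => brk j0 (fun k : Fin 8 =>
        if k = 4 then 1 - j0 0 ^ 2 - 2 * (j0 0 * mc 2)
        else if k = 6 then -(2 * (j0 0 * mc 3)) - j0 1 ^ 2 else 0) k + brk d0 (fun k : Fin 8 =>
        if k = 4 then 2 * j0 0 + mc 2 - j0 0 ^ 2 * mc 2
        else if k = 6 then mc 3 - j0 0 ^ 2 * mc 3 - j0 1 ^ 2 * mc 2 else 0) k) = (fun k : Fin 8 =>
        if k = 6 then 3 * j0 0 - j0 0 ^ 3 + (1 - 3 * j0 0 ^ 2) * mc 2 else 0) := by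
      funext i
      fin_cases i <;> simp [brk, hd0def] <;> ring
    rw [hc3, hn3, lc_single, lc_single] at h3
    set P : ℝ := 1 - 3 * j0 0 ^ 2 - (3 * j0 0 - j0 0 ^ 3) * mc 2 with hPdef
    set Q : ℝ := 3 * j0 0 - j0 0 ^ 3 + (1 - 3 * j0 0 ^ 2) * mc 2 with hQdef
    -- h3 : J (P • e 6) = Q • e 6
    have hP6 : P • J (e 6) = Q • e 6 := by rw [← map_smul]; exact h3
    have hQ6 : Q • J (e 6) = -(P • e 6) := by
      have hh := congrArg J h3
      rw [hJ2, map_smul] at hh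
      exact hh.symm ▸ rfl
    have hz : (Q * Q + P * P) • (e 6 : g) = 0 := by
      have e1 : P • (Q • J (e 6)) = -(P • (P • e 6)) := by rw [hQ6, smul_neg]
      have e2 : Q • (P • J (e 6)) = Q • (Q • e 6) := by rw [hP6]
      have e3 : P • (Q • J (e 6)) = Q • (P • J (e 6)) := smul_comm P Q _
      have e4 : Q • (Q • (e 6 : g)) = -(P • (P • e 6)) := by rw [← e2, ← e3, e1]
      rw [add_smul, ← smul_smul, ← smul_smul, e4]
      abel
    have hPQ : Q * Q + P * P = 0 := by
      rcases smul_eq_zero.mp hz with h | h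
      · exact h
      · exact absurd h (e.ne_zero 6)
    have hfac : Q * Q + P * P = (1 + j0 0 ^ 2) ^ 3 * (1 + mc 2 ^ 2) := by
      rw [hPdef, hQdef]; ring
    rw [hfac] at hPQ
    have : (0:ℝ) < (1 + j0 0 ^ 2) ^ 3 * (1 + mc 2 ^ 2) := by positivity
    linarith
  · -- not all of J e_k (k ≥ 2) lie in V
    push_neg at hall
    obtain ⟨K, hK0, hK1, hKne⟩ := hall
    by_cases hdet : ∀ k l : Fin 8, k ≠ 0 → k ≠ 1 → l ≠ 0 → l ≠ 1 →
        e.repr (J (e k)) 0 * e.repr (J (e l)) 1 -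
          e.repr (J (e l)) 0 * e.repr (J (e k)) 1 = 0
    · -- rank-one case: impossible
      set sK : ℝ := e.repr (J (e K)) 0 with hsKdef
      set tK : ℝ := e.repr (J (e K)) 1 with htKdef
      have hψ : ∀ x : g, tK * e.repr (J x) 0 - sK * e.repr (J x) 1 =
          (tK * e.repr (J (e 0)) 0 - sK * e.repr (J (e 0)) 1) * e.repr x 0 +
          (tK * e.repr (J (e 1)) 0 - sK * e.repr (J (e 1)) 1) * e.repr x 1 := by
        intro x
        have h0 : e.repr (J x) 0 = ∑ k, e.repr x k * e.repr (J (e k)) 0 := by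
          conv_lhs => rw [← lc_repr e x]
          exact reprJ _ 0
        have h1 : e.repr (J x) 1 = ∑ k, e.repr x k * e.repr (J (e k)) 1 := by
          conv_lhs => rw [← lc_repr e x]
          exact reprJ _ 1
        rw [h0, h1, Fin.sum_univ_eight, Fin.sum_univ_eight]
        have q2 := hdet 2 K (by decide) (by decide) hK0 hK1
        have q3 := hdet 3 K (by decide) (by decide) hK0 hK1
        have q4 := hdet 4 K (by decide) (by decide) hK0 hK1
        have q5 := hdet 5 K (by decide) (by decide) hK0 hK1
        have q6 := hdet 6 K (by decide) (by decide) hK0 hK1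
        have q7 := hdet 7 K (by decide) (by decide) hK0 hK1
        rw [← hsKdef, ← htKdef] at q2 q3 q4 q5 q6 q7
        linear_combination (e.repr x 2) * q2 + (e.repr x 3) * q3 + (e.repr x 4) * q4 +
          (e.repr x 5) * q5 + (e.repr x 6) * q6 + (e.repr x 7) * q7
      set a : ℝ := tK * e.repr (J (e 0)) 0 - sK * e.repr (J (e 0)) 1 with hadef
      set b : ℝ := tK * e.repr (J (e 1)) 0 - sK * e.repr (J (e 1)) 1 with hbdef
      have hi : ∀ x : g, a * e.repr (J x) 0 + b * e.repr (J x) 1 =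
          -(tK * e.repr x 0 - sK * e.repr x 1) := by
        intro x
        have hx := hψ (J x)
        rw [hJ2] at hx
        simp only [map_neg, Finsupp.coe_neg, Pi.neg_apply] at hx
        linarith [hx]
      have E3 := hi (e K)
      have E4 := hi (e 0)
      have E5 := hi (e 1)
      rw [← hsKdef, ← htKdef] at E3
      simp only [Module.Basis.repr_self_apply] at E3 E4 E5
      rw [if_neg hK0, if_neg hK1] at E3
      norm_num at E3 E4 E5
      -- scalar contradiction
      set s0 : ℝ := e.repr (J (e 0)) 0
      set t0 : ℝ := e.repr (J (e 0)) 1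
      set s1 : ℝ := e.repr (J (e 1)) 0
      set t1 : ℝ := e.repr (J (e 1)) 1
      set D : ℝ := sK ^ 2 + tK ^ 2 with hDdef
      set X : ℝ := a * tK - b * sK with hXdef
      have htKz : tK * (D ^ 2 + X ^ 2) = 0 := by
        rw [hDdef, hXdef]
        linear_combination (sK^2+tK^2)^2 * E4 -
          ((sK^2+tK^2) * (s0*sK + t0*tK) + (a*tK - b*sK)*sK) * E3
      have hsKz : sK * (D ^ 2 + X ^ 2) = 0 := by
        rw [hDdef, hXdef]
        linear_combination (-(sK^2+tK^2)^2) * E5 +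
          ((a*tK - b*sK)*tK + (sK^2+tK^2) * (s1*sK + t1*tK)) * E3
      have hDpos : 0 < D := by
        rcases eq_or_ne sK 0 with h | h
        · have h2 := hKne h
          have : 0 < tK * tK := mul_self_pos.mpr h2
          rw [hDdef]; nlinarith [sq_nonneg sK]
        · have : 0 < sK * sK := mul_self_pos.mpr h
          rw [hDdef]; nlinarith [sq_nonneg tK]
      have hpos : 0 < D ^ 2 + X ^ 2 := by positivity
      have hs0 : sK = 0 := by
        rcases mul_eq_zero.mp hsKz with h | h
        · exact h
        · linarith
      have ht0 : tK = 0 := by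
        rcases mul_eq_zero.mp htKz with h | h
        · exact h
        · linarith
      exact hKne hs0 ht0
    · -- CASE I
      push_neg at hdet
      obtain ⟨k, l, hk0, hk1, hl0, hl1, hDne⟩ := hdet
      have hkl : k ≠ l := by rintro rfl; exact hDne (by ring)
      set sk : ℝ := e.repr (J (e k)) 0 with hskdef
      set tk : ℝ := e.repr (J (e k)) 1 with htkdef
      set sl : ℝ := e.repr (J (e l)) 0 with hsldef
      set tl : ℝ := e.repr (J (e l)) 1 with htldef
      set Δ : ℝ := sk * tl - sl * tk with hΔdef
      -- hDne : Δ ≠ 0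
      set v : Fin 8 → ℝ := fun i => if i = k then tl / Δ else if i = l then -(tk / Δ) else 0
        with hvdef
      set v' : Fin 8 → ℝ := fun i => if i = k then -(sl / Δ) else if i = l then sk / Δ else 0
        with hv'def
      have hv0 : v 0 = 0 := by simp [hvdef, Ne.symm hk0, Ne.symm hl0]
      have hv1 : v 1 = 0 := by simp [hvdef, Ne.symm hk1, Ne.symm hl1]
      have hv'0 : v' 0 = 0 := by simp [hv'def, Ne.symm hk0, Ne.symm hl0]
      have hv'1 : v' 1 = 0 := by simp [hv'def, Ne.symm hk1, Ne.symm hl1]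
      have hvsplit : lc e v = (tl / Δ) • e k + (-(tk / Δ)) • e l := by
        rw [← lc_single e (tl / Δ) k, ← lc_single e (-(tk / Δ)) l, ← lc_add]
        apply congrArg
        funext i
        by_cases hik : i = k
        · subst hik; simp [hvdef, hkl]
        · by_cases hil : i = l
          · subst hil; simp [hvdef, hik]
          · simp [hvdef, hik, hil]
      have hv'split : lc e v' = (-(sl / Δ)) • e k + (sk / Δ) • e l := by
        rw [← lc_single e (-(sl / Δ)) k, ← lc_single e (sk / Δ) l, ← lc_add]
        apply congrArg
        funext i
        by_cases hik : i = k
        · subst hik; simp [hv'def, hkl]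
        · by_cases hil : i = l
          · subst hil; simp [hv'def, hik]
          · simp [hv'def, hik, hil]
      have hJv : J (lc e v) = (tl / Δ) • J (e k) + (-(tk / Δ)) • J (e l) := by
        rw [hvsplit, map_add, map_smul, map_smul]
      have hJv' : J (lc e v') = (-(sl / Δ)) • J (e k) + (sk / Δ) • J (e l) := by
        rw [hv'split, map_add, map_smul, map_smul]
      set ξc : Fin 8 → ℝ := ⇑(e.repr (J (lc e v))) with hξcdef
      set ηc : Fin 8 → ℝ := ⇑(e.repr (J (lc e v'))) with hηcdef
      have hξ0 : ξc 0 = 1 := by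
        rw [hξcdef]
        show e.repr (J (lc e v)) 0 = 1
        rw [hJv]
        simp only [map_add, map_smul, Finsupp.coe_add, Finsupp.coe_smul, Pi.add_apply,
          Pi.smul_apply, smul_eq_mul]
        rw [← hskdef, ← hsldef]
        have : tl / Δ * sk + -(tk / Δ) * sl = (sk * tl - sl * tk) / Δ := by ring
        rw [this, ← hΔdef, div_self hDne]
      have hξ1 : ξc 1 = 0 := by
        rw [hξcdef]
        show e.repr (J (lc e v)) 1 = 0
        rw [hJv]
        simp only [map_add, map_smul, Finsupp.coe_add, Finsupp.coe_smul, Pi.add_apply,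
          Pi.smul_apply, smul_eq_mul]
        rw [← htkdef, ← htldef]
        ring
      have hη0 : ηc 0 = 0 := by
        rw [hηcdef]
        show e.repr (J (lc e v')) 0 = 0
        rw [hJv']
        simp only [map_add, map_smul, Finsupp.coe_add, Finsupp.coe_smul, Pi.add_apply,
          Pi.smul_apply, smul_eq_mul]
        rw [← hskdef, ← hsldef]
        ring
      have hη1 : ηc 1 = 1 := by
        rw [hηcdef]
        show e.repr (J (lc e v')) 1 = 1
        rw [hJv']
        simp only [map_add, map_smul, Finsupp.coe_add, Finsupp.coe_smul, Pi.add_apply,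
          Pi.smul_apply, smul_eq_mul]
        rw [← htkdef, ← htldef]
        have : -(sl / Δ) * tk + sk / Δ * tl = (sk * tl - sl * tk) / Δ := by ring
        rw [this, ← hΔdef, div_self hDne]
      have hξlc : J (lc e v) = lc e ξc := by rw [hξcdef, lc_repr]
      have hηlc : J (lc e v') = lc e ηc := by rw [hηcdef, lc_repr]
      have hJξ : J (lc e ξc) = lc e (fun i => -(v i)) := by
        rw [← hξlc, hJ2]
        exact (lc_neg e v).symm
      have hJη : J (lc e ηc) = lc e (fun i => -(v' i)) := by
        rw [← hηlc, hJ2]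
        exact (lc_neg e v').symm
      have stepI : ∀ cf nf : Fin 8 → ℝ, cf 0 = 0 → cf 1 = 0 → nf 0 = 0 → nf 1 = 0 →
          J (lc e cf) = lc e nf → J (lc e (brk ξc cf)) = lc e (brk ξc nf) := by
        intro cf nf hc0 hc1 hn0 hn1 h
        have hNs := hN (lc e ξc) (lc e cf)
        rw [hJξ, h] at hNs
        simp only [hlie] at hNs
        rw [brk_VV (fun i => -(v i)) cf (by simp [hv0]) (by simp [hv1]) hc0 hc1,
            brk_VV (fun i => -(v i)) nf (by simp [hv0]) (by simp [hv1]) hn0 hn1,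
            lc_zero, map_zero] at hNs
        have key : lc e (brk ξc cf) = -(J (lc e (brk ξc nf))) := by
          apply eq_neg_of_add_eq_zero_left
          rw [← hNs]; abel
        rw [key, map_neg, hJ2, neg_neg]
      -- the base step
      have hNb := hN (lc e ξc) (lc e ηc)
      rw [hJξ, hJη] at hNb
      simp only [hlie] at hNb
      rw [brk_VV (fun i => -(v i)) (fun i => -(v' i)) (by simp [hv0]) (by simp [hv1])
        (by simp [hv'0]) (by simp [hv'1]), lc_zero] at hNb
      have hbase : J (lc e (brk ξc ηc)) =
          lc e (fun i => brk (fun i' => -(v i')) ηc i + brk ξc (fun i' => -(v' i')) i) := by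
        have key : lc e (brk ξc ηc) =
            -(J (lc e (brk (fun i' => -(v i')) ηc)) + J (lc e (brk ξc (fun i' => -(v' i'))))) := by
          apply eq_neg_of_add_eq_zero_left
          rw [← hNb]; abel
        rw [key, map_neg, map_add, hJ2, hJ2, lc_add]
        abel
      set zc0 : Fin 8 → ℝ := brk ξc ηc with hzc0def
      set nz0 : Fin 8 → ℝ :=
        fun i => brk (fun i' => -(v i')) ηc i + brk ξc (fun i' => -(v' i')) i with hnz0def
      have hzc0_0 : zc0 0 = 0 := brk_apply0 _ _
      have hzc0_1 : zc0 1 = 0 := brk_apply1 _ _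
      have hzc0_2 : zc0 2 = 1 := by simp [hzc0def, brk, hξ0, hξ1, hη0, hη1]
      have hnz0_0 : nz0 0 = 0 := by simp [hnz0def, brk_apply0]
      have hnz0_1 : nz0 1 = 0 := by simp [hnz0def, brk_apply1]
      have hnz0_2 : nz0 2 = 0 := by simp [hnz0def, brk, hv0, hv1, hv'0, hv'1]
      have h1 := stepI zc0 nz0 hzc0_0 hzc0_1 hnz0_0 hnz0_1 hbase
      set zc1 : Fin 8 → ℝ := brk ξc zc0 with hzc1def
      set nz1 : Fin 8 → ℝ := brk ξc nz0 with hnz1def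
      have hzc1_0 : zc1 0 = 0 := brk_apply0 _ _
      have hzc1_1 : zc1 1 = 0 := brk_apply1 _ _
      have hzc1_2 : zc1 2 = 0 := by simp [hzc1def, brk, hzc0_0, hzc0_1]
      have hzc1_3 : zc1 3 = 1 := by simp [hzc1def, brk, hξ0, hzc0_0, hzc0_2]
      have hnz1_0 : nz1 0 = 0 := brk_apply0 _ _
      have hnz1_1 : nz1 1 = 0 := brk_apply1 _ _
      have hnz1_2 : nz1 2 = 0 := by simp [hnz1def, brk, hnz0_0, hnz0_1]
      have hnz1_3 : nz1 3 = 0 := by simp [hnz1def, brk, hnz0_0, hnz0_2]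
      have h2 := stepI zc1 nz1 hzc1_0 hzc1_1 hnz1_0 hnz1_1 h1
      set zc2 : Fin 8 → ℝ := brk ξc zc1 with hzc2def
      set nz2 : Fin 8 → ℝ := brk ξc nz1 with hnz2def
      have hzc2_0 : zc2 0 = 0 := brk_apply0 _ _
      have hzc2_1 : zc2 1 = 0 := brk_apply1 _ _
      have hzc2_2 : zc2 2 = 0 := by simp [hzc2def, brk, hzc1_0, hzc1_1]
      have hzc2_3 : zc2 3 = 0 := by simp [hzc2def, brk, hzc1_0, hzc1_2]
      have hzc2_4 : zc2 4 = 1 := by simp [hzc2def, brk, hξ0, hzc1_0, hzc1_3]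
      have hnz2_0 : nz2 0 = 0 := brk_apply0 _ _
      have hnz2_1 : nz2 1 = 0 := brk_apply1 _ _
      have hnz2_2 : nz2 2 = 0 := by simp [hnz2def, brk, hnz1_0, hnz1_1]
      have hnz2_3 : nz2 3 = 0 := by simp [hnz2def, brk, hnz1_0, hnz1_2]
      have hnz2_4 : nz2 4 = 0 := by simp [hnz2def, brk, hnz1_0, hnz1_3]
      have h3 := stepI zc2 nz2 hzc2_0 hzc2_1 hnz2_0 hnz2_1 h2
      have hzc3 : brk ξc zc2 = (fun i : Fin 8 => if i = 6 then (1:ℝ) else 0) := by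
        funext i
        fin_cases i <;>
          simp [brk, hξ0, hξ1, hzc2_0, hzc2_1, hzc2_2, hzc2_3, hzc2_4]
      have hnz3 : brk ξc nz2 = (fun _ : Fin 8 => (0:ℝ)) := by
        funext i
        fin_cases i <;>
          simp [brk, hξ0, hξ1, hnz2_0, hnz2_1, hnz2_2, hnz2_3, hnz2_4]
      rw [hzc3, hnz3, lc_single, lc_zero, one_smul] at h3
      -- h3 : J (e 6) = 0
      have h6 := hJ2 (e 6)
      rw [h3, map_zero] at h6
      exact e.ne_zero 6 (neg_eq_zero.mp h6.symm)
end

section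
/- Let g be the 10-dimensional real nilpotent Lie algebra with basis X₁,...,X₁₀ and nonzero brackets [X₃,X₉] = [X₄,X₁₀] = X₁, [X₅,X₉] = [X₆,X₁₀] = X₂, [X₇,X₉] = X₃, [X₇,X₁₀] = X₄, [X₈,X₉] = X₅, [X₈,X₁₀] = X₆. Then the linear map J defined by JX₁ = -X₇, JX₂ = -X₈, JX₃ = X₄, JX₅ = X₆, JX₉ = X₁₀ (and J² = -Id) is an integrable complex structure on g which is strongly non-nilpotent, i.e., a₁(J) = {0}. -/
theorem my_sum_univ_ten {M : Type*} [AddCommMonoid M] (f : Fin 10 → M) :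
    ∑ i, f i = f 0 + f 1 + f 2 + f 3 + f 4 + f 5 + f 6 + f 7 + f 8 + f 9 := by
  rw [Fin.sum_univ_castSucc, Fin.sum_univ_castSucc, Fin.sum_univ_eight]
  rfl

set_option maxHeartbeats 1000000 in
/-- on the 10-dimensional nilpotent Lie algebra with basis
`e 0,…,e 9` (`e i = X_{i+1}`) and nonzero brackets
`[X₃,X₉]=[X₄,X₁₀]=X₁`, `[X₅,X₉]=[X₆,X₁₀]=X₂`, `[X₇,X₉]=X₃`, `[X₇,X₁₀]=X₄`,
`[X₈,X₉]=X₅`, `[X₈,X₁₀]=X₆`, the almost complex structure `J` with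
`JX₁=-X₇, JX₂=-X₈, JX₃=X₄, JX₅=X₆, JX₉=X₁₀` and `J²=-Id` is integrable and
strongly non-nilpotent. -/
theorem example_dim10_snn (g : Type*) [LieRing g] [LieAlgebra ℝ g]
    (e : Module.Basis (Fin 10) ℝ g)
    (hbr : ∀ i j : Fin 10, i < j → ⁅e i, e j⁆ =
      if i = 2 ∧ j = 8 then e 0
      else if i = 3 ∧ j = 9 then e 0
      else if i = 4 ∧ j = 8 then e 1
      else if i = 5 ∧ j = 9 then e 1
      else if i = 6 ∧ j = 8 then e 2
      else if i = 6 ∧ j = 9 then e 3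
      else if i = 7 ∧ j = 8 then e 4
      else if i = 7 ∧ j = 9 then e 5
      else 0)
    (J : g →ₗ[ℝ] g) (hJ2 : ∀ X : g, J (J X) = -X)
    (hJ0 : J (e 0) = -(e 6)) (hJ1 : J (e 1) = -(e 7))
    (hJ2' : J (e 2) = e 3) (hJ4 : J (e 4) = e 5)
    (hJ8 : J (e 8) = e 9) :
    (∀ X Y : g, ⁅X, Y⁆ + J ⁅J X, Y⁆ + J ⁅X, J Y⁆ - ⁅J X, J Y⁆ = 0) ∧
    (∀ X : g, (∀ Z : g, ⁅X, Z⁆ = 0 ∧ ⁅J X, Z⁆ = 0) → X = 0) := by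
  -- the remaining values of J
  have j3 : J (e 3) = -(e 2) := by have h := hJ2 (e 2); rwa [hJ2'] at h
  have j5 : J (e 5) = -(e 4) := by have h := hJ2 (e 4); rwa [hJ4] at h
  have j9 : J (e 9) = -(e 8) := by have h := hJ2 (e 8); rwa [hJ8] at h
  have j6 : J (e 6) = e 0 := by
    have h := hJ2 (e 0); rw [hJ0, map_neg] at h
    exact neg_injective h
  have j7 : J (e 7) = e 1 := by
    have h := hJ2 (e 1); rw [hJ1, map_neg] at h
    exact neg_injective h
  -- full bracket table
  have hb : ∀ i j : Fin 10, ⁅e i, e j⁆ =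
      if i = 2 ∧ j = 8 then e 0
      else if i = 3 ∧ j = 9 then e 0
      else if i = 4 ∧ j = 8 then e 1
      else if i = 5 ∧ j = 9 then e 1
      else if i = 6 ∧ j = 8 then e 2
      else if i = 6 ∧ j = 9 then e 3
      else if i = 7 ∧ j = 8 then e 4
      else if i = 7 ∧ j = 9 then e 5
      else if i = 8 ∧ j = 2 then -e 0
      else if i = 9 ∧ j = 3 then -e 0
      else if i = 8 ∧ j = 4 then -e 1
      else if i = 9 ∧ j = 5 then -e 1
      else if i = 8 ∧ j = 6 then -e 2
      else if i = 9 ∧ j = 6 then -e 3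
      else if i = 8 ∧ j = 7 then -e 4
      else if i = 9 ∧ j = 7 then -e 5
      else 0 := by
    intro i j
    fin_cases i <;> fin_cases j <;>
      first
      | (rw [lie_self]; simp)
      | (rw [hbr _ _ (by decide)]; simp)
      | (rw [← lie_skew, hbr _ _ (by decide)]; simp)
  -- integrability on basis vectors
  have hN : ∀ i j : Fin 10,
      ⁅e i, e j⁆ + J ⁅J (e i), e j⁆ + J ⁅e i, J (e j)⁆ - ⁅J (e i), J (e j)⁆ = 0 := by
    intro i j
    fin_cases i <;> fin_cases j <;>
      simp [hb, hJ0, hJ1, hJ2', hJ4, hJ8, j3, j5, j6, j7, j9]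
  constructor
  · -- integrability in general: bilinearity
    intro X Y
    let N : g →ₗ[ℝ] g →ₗ[ℝ] g := LinearMap.mk₂ ℝ
      (fun X Y => ⁅X, Y⁆ + J ⁅J X, Y⁆ + J ⁅X, J Y⁆ - ⁅J X, J Y⁆)
      (by intro m m' y; simp [add_lie, lie_add]; abel)
      (by intro c m y; simp [smul_lie, lie_smul, smul_add, smul_sub])
      (by intro m y y'; simp [add_lie, lie_add]; abel)
      (by intro c m y; simp [smul_lie, lie_smul, smul_add, smul_sub])
    have hNzero : N = 0 := by
      apply e.ext; intro i
      apply e.ext; intro j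
      simpa [N] using hN i j
    have h := DFunLike.congr_fun (DFunLike.congr_fun hNzero X) Y
    simpa [N] using h
  · -- strongly non-nilpotent
    intro X hX
    -- expansion of brackets
    have bl : ∀ (Y w : g), ⁅Y, w⁆ = ∑ i, e.repr Y i • ⁅e i, w⁆ := by
      intro Y w
      let R : g →ₗ[ℝ] g :=
        { toFun := fun x => ⁅x, w⁆
          map_add' := fun a b => add_lie a b w
          map_smul' := fun r a => smul_lie r a w }
      have : ⁅Y, w⁆ = R Y := rfl
      rw [this, ← e.sum_repr Y, map_sum]
      simp [R]
    have h8 : ∑ i, e.repr X i • ⁅e i, e 8⁆ = 0 := by rw [← bl]; exact (hX (e 8)).1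
    have h9 : ∑ i, e.repr X i • ⁅e i, e 9⁆ = 0 := by rw [← bl]; exact (hX (e 9)).1
    have h2 : ∑ i, e.repr X i • ⁅e i, e 2⁆ = 0 := by rw [← bl]; exact (hX (e 2)).1
    have h3 : ∑ i, e.repr X i • ⁅e i, e 3⁆ = 0 := by rw [← bl]; exact (hX (e 3)).1
    simp only [my_sum_univ_ten, hb] at h8 h9 h2 h3
    norm_num at h8 h9 h2 h3
    -- h8 : c2 • e0 + c4 • e1 + c6 • e2 + c7 • e4 = 0, etc.
    have coeff : ∀ (v : g) (k : Fin 10), v = 0 → e.repr v k = 0 := by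
      intro v k hv; rw [hv]; simp
    have hc2 : e.repr X 2 = 0 := by
      have := congrArg (fun z => e.repr z (0 : Fin 10)) h8
      simpa [Module.Basis.repr_self, Finsupp.single_apply] using this
    have hc4 : e.repr X 4 = 0 := by
      have := congrArg (fun z => e.repr z (1 : Fin 10)) h8
      simpa [Module.Basis.repr_self, Finsupp.single_apply] using this
    have hc6 : e.repr X 6 = 0 := by
      have := congrArg (fun z => e.repr z (2 : Fin 10)) h8
      simpa [Module.Basis.repr_self, Finsupp.single_apply] using this
    have hc7 : e.repr X 7 = 0 := by
      have := congrArg (fun z => e.repr z (4 : Fin 10)) h8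
      simpa [Module.Basis.repr_self, Finsupp.single_apply] using this
    have hc3 : e.repr X 3 = 0 := by
      have := congrArg (fun z => e.repr z (0 : Fin 10)) h9
      simpa [Module.Basis.repr_self, Finsupp.single_apply, hc6, hc7] using this
    have hc5 : e.repr X 5 = 0 := by
      have := congrArg (fun z => e.repr z (1 : Fin 10)) h9
      simpa [Module.Basis.repr_self, Finsupp.single_apply, hc6, hc7] using this
    have hc8 : e.repr X 8 = 0 := by
      have := congrArg (fun z => e.repr z (0 : Fin 10)) h2
      simpa [Module.Basis.repr_self, Finsupp.single_apply] using this
    have hc9 : e.repr X 9 = 0 := by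
      have := congrArg (fun z => e.repr z (0 : Fin 10)) h3
      simpa [Module.Basis.repr_self, Finsupp.single_apply] using this
    -- X = c0 e0 + c1 e1
    have hXe : X = e.repr X 0 • e 0 + e.repr X 1 • e 1 := by
      conv_lhs => rw [← e.sum_repr X]
      rw [my_sum_univ_ten]
      simp [hc2, hc3, hc4, hc5, hc6, hc7, hc8, hc9]
    have hJX : J X = -(e.repr X 0 • e 6) - e.repr X 1 • e 7 := by
      rw [hXe]; simp [hJ0, hJ1]; abel
    have hJ8' : ⁅J X, e 8⁆ = 0 := (hX (e 8)).2
    rw [hJX] at hJ8'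
    have hv : -(e.repr X 0 • e 2) - e.repr X 1 • e 4 = 0 := by
      rw [← hJ8']
      simp [sub_lie, neg_lie, smul_lie, hb]
    have hc0 : e.repr X 0 = 0 := by
      have := congrArg (fun z => e.repr z (2 : Fin 10)) hv
      simpa [Module.Basis.repr_self, Finsupp.single_apply] using this
    have hc1 : e.repr X 1 = 0 := by
      have := congrArg (fun z => e.repr z (4 : Fin 10)) hv
      simpa [Module.Basis.repr_self, Finsupp.single_apply] using this
    rw [hXe, hc0, hc1]
    simp
end
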